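/- arXiv:2102.07326 — 2 statements merged into one kernel-verified Lean document; each statement's English description precedes it below -/
import Mathlib

section
/- The function φ(p) = (2p² + 15p + 19)/(3(p+3)(2p+3)) is strictly decreasing on (0, ∞), with φ(p) → 19/27 as p → 0⁺ and φ(p) → 1/3 as p → ∞. In particular, for every target ratio φ₀ ∈ (1/3, 19/27) there exists a unique p > 0 with φ(p) = φ₀. -/
open Filter Set

theorem stmt_7 (φ : ℝ → ℝ)
    (hφ : ∀ p : ℝ, φ p = (2 * p ^ 2 + 15 * p + 19) / (3 * (p + 3) * (2*p + 3))) :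
    StrictAntiOn φ (Set.Ioi 0) ∧
    Tendsto φ (nhdsWithin 0 (Set.Ioi 0)) (nhds (19/27)) ∧
    Tendsto φ atTop (nhds (1/3)) ∧
    (∀ φ₀ ∈ Set.Ioo (1/3 : ℝ) (19/27), ∃! p : ℝ, 0 < p ∧ φ p = φ₀) := by
  obtain rfl : φ = fun p => (2 * p ^ 2 + 15 * p + 19) / (3 * (p + 3) * (2*p + 3)) :=
    funext hφ
  have hanti : StrictAntiOn (fun p : ℝ => (2 * p ^ 2 + 15 * p + 19) / (3 * (p + 3) * (2*p + 3)))
      (Set.Ioi 0) := by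
    intro a ha b hb hab
    simp only [Set.mem_Ioi] at ha hb
    have hda : 0 < 3 * (a + 3) * (2*a + 3) := by nlinarith
    have hdb : 0 < 3 * (b + 3) * (2*b + 3) := by nlinarith
    simp only []
    rw [div_lt_div_iff₀ hdb hda]
    nlinarith [mul_pos (mul_pos ha hb) (sub_pos.mpr hab), mul_pos ha (sub_pos.mpr hab),
      mul_pos hb (sub_pos.mpr hab), sub_pos.mpr hab]
  have h0 : Tendsto (fun p : ℝ => (2 * p ^ 2 + 15 * p + 19) / (3 * (p + 3) * (2*p + 3)))
      (nhdsWithin 0 (Set.Ioi 0)) (nhds (19/27)) := by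
    have hc : ContinuousAt (fun p : ℝ => (2 * p ^ 2 + 15 * p + 19) / (3 * (p + 3) * (2*p + 3)))
        0 := by
      apply ContinuousAt.div (by fun_prop) (by fun_prop)
      norm_num
    have := hc.tendsto.mono_left (nhdsWithin_le_nhds (s := Set.Ioi 0))
    convert this using 2
    norm_num
  have htop : Tendsto (fun p : ℝ => (2 * p ^ 2 + 15 * p + 19) / (3 * (p + 3) * (2*p + 3)))
      atTop (nhds (1/3)) := by
    have hinv : Tendsto (fun p : ℝ => p⁻¹) atTop (nhds 0) := tendsto_inv_atTop_zero
    have hnum : Tendsto (fun p : ℝ => 2 + 15 * p⁻¹ + 19 * p⁻¹ * p⁻¹) atTop (nhds 2) := by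
      have := (((hinv.const_mul (15:ℝ)).const_add 2).add
        ((hinv.const_mul (19:ℝ)).mul hinv))
      simpa using this
    have hden : Tendsto (fun p : ℝ => 6 + 27 * p⁻¹ + 27 * p⁻¹ * p⁻¹) atTop (nhds 6) := by
      have := (((hinv.const_mul (27:ℝ)).const_add 6).add
        ((hinv.const_mul (27:ℝ)).mul hinv))
      simpa using this
    have h1 : Tendsto (fun p : ℝ => (2 + 15 * p⁻¹ + 19 * p⁻¹ * p⁻¹) /
        (6 + 27 * p⁻¹ + 27 * p⁻¹ * p⁻¹)) atTop (nhds (2/6)) :=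
      hnum.div hden (by norm_num)
    have heq : (fun p : ℝ => (2 + 15 * p⁻¹ + 19 * p⁻¹ * p⁻¹) /
        (6 + 27 * p⁻¹ + 27 * p⁻¹ * p⁻¹)) =ᶠ[atTop]
        (fun p : ℝ => (2 * p ^ 2 + 15 * p + 19) / (3 * (p + 3) * (2*p + 3))) := by
      filter_upwards [eventually_gt_atTop (0:ℝ)] with p hp
      have hp' : p ≠ 0 := ne_of_gt hp
      field_simp
      ring
    have := h1.congr' heq
    convert this using 2
    norm_num
  refine ⟨hanti, h0, htop, ?_⟩
  intro φ₀ hφ₀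
  obtain ⟨h13, h19⟩ := hφ₀
  -- find a near 0 with φ a > φ₀
  have ha : ∃ a : ℝ, 0 < a ∧ φ₀ < (2 * a ^ 2 + 15 * a + 19) / (3 * (a + 3) * (2*a + 3)) := by
    have h1 : ∀ᶠ p in nhdsWithin 0 (Set.Ioi 0),
        φ₀ < (2 * p ^ 2 + 15 * p + 19) / (3 * (p + 3) * (2*p + 3)) :=
      h0.eventually (eventually_gt_nhds h19)
    have h2 : ∀ᶠ p in nhdsWithin (0:ℝ) (Set.Ioi 0), p ∈ Set.Ioi (0:ℝ) :=
      self_mem_nhdsWithin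
    obtain ⟨a, h1a, h2a⟩ := (h1.and h2).exists
    exact ⟨a, h2a, h1a⟩
  obtain ⟨a, ha0, haφ⟩ := ha
  have hb : ∃ b : ℝ, a < b ∧ (2 * b ^ 2 + 15 * b + 19) / (3 * (b + 3) * (2*b + 3)) < φ₀ := by
    have h1 : ∀ᶠ p in atTop,
        (2 * p ^ 2 + 15 * p + 19) / (3 * (p + 3) * (2*p + 3)) < φ₀ :=
      htop.eventually (eventually_lt_nhds h13)
    obtain ⟨b, h1b, h2b⟩ := (h1.and (eventually_gt_atTop a)).exists
    exact ⟨b, h2b, h1b⟩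
  obtain ⟨b, hab, hbφ⟩ := hb
  have hcont : ContinuousOn
      (fun p : ℝ => (2 * p ^ 2 + 15 * p + 19) / (3 * (p + 3) * (2*p + 3)))
      (Set.Icc a b) := by
    apply ContinuousOn.div (by fun_prop) (by fun_prop)
    intro x hx
    have : 0 < x := lt_of_lt_of_le ha0 hx.1
    nlinarith
  have hmem : φ₀ ∈ Set.Icc ((2 * b ^ 2 + 15 * b + 19) / (3 * (b + 3) * (2*b + 3)))
      ((2 * a ^ 2 + 15 * a + 19) / (3 * (a + 3) * (2*a + 3))) :=
    ⟨le_of_lt hbφ, le_of_lt haφ⟩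
  obtain ⟨p, hp, hpφ⟩ := intermediate_value_Icc' (le_of_lt hab) hcont hmem
  have hp0 : 0 < p := lt_of_lt_of_le ha0 hp.1
  refine ⟨p, ⟨hp0, hpφ⟩, ?_⟩
  intro q ⟨hq0, hqφ⟩
  exact hanti.injOn (Set.mem_Ioi.mpr hq0) (Set.mem_Ioi.mpr hp0) (by simp only [] at hqφ hpφ ⊢; rw [hqφ, hpφ])
end

section
/- Let p > 0, r = (1+2p)^{2+1/p}/(4p²), and define a_p(θ) = rαθ(1-θ^p)² for a constant α < 0. Then for all θ ∈ [0,1], α ≤ a_p(θ) ≤ 0, i.e., the deceleration profile is bounded between the peak deceleration α and zero. -/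
lemma key_aux (p x : ℝ) (hp : 0 < p) (hx0 : 0 ≤ x) (hx1 : x ≤ 1) :
    x ^ (1/p) * (1 - x) ^ 2 * ((1 + 2*p) ^ (2 + 1/p) / (4 * p ^ 2)) ≤ 1 := by
  have hpp : (0:ℝ) < 1 + 2*p := by linarith
  set w₁ : ℝ := 1/(1+2*p) with hw₁def
  set w₂ : ℝ := 2*p/(1+2*p) with hw₂def
  set y : ℝ := (1-x)/(2*p) with hydef
  have hw₁ : 0 ≤ w₁ := by positivity
  have hw₂ : 0 ≤ w₂ := by positivity
  have hy0 : 0 ≤ y := by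
    have : 0 ≤ 1 - x := by linarith
    positivity
  have hsum : w₁ + w₂ = 1 := by
    rw [hw₁def, hw₂def]; field_simp
  have h := Real.geom_mean_le_arith_mean2_weighted hw₁ hw₂ hx0 hy0 hsum
  have hrhs : w₁ * x + w₂ * y = 1/(1+2*p) := by
    rw [hw₁def, hw₂def, hydef]; field_simp; ring
  rw [hrhs] at h
  set s : ℝ := 2 + 1/p with hsdef
  have hs : 0 < s := by positivity
  have h2 : (x ^ w₁ * y ^ w₂) ^ s ≤ (1/(1+2*p)) ^ s :=
    Real.rpow_le_rpow (by positivity) h hs.le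
  have hw₁s : w₁ * s = 1/p := by
    rw [hw₁def, hsdef]; field_simp
    try ring_nf
    try tauto
  have hw₂s : w₂ * s = 2 := by
    rw [hw₂def, hsdef]; field_simp
    try ring_nf
    try tauto
  have hL : (x ^ w₁ * y ^ w₂) ^ s = x ^ (1/p) * y ^ (2:ℝ) := by
    rw [Real.mul_rpow (Real.rpow_nonneg hx0 _) (Real.rpow_nonneg hy0 _),
      ← Real.rpow_mul hx0, ← Real.rpow_mul hy0, hw₁s, hw₂s]
  have hy2 : y ^ (2:ℝ) = (1-x)^2 / (4*p^2) := by
    rw [show ((2:ℝ) = ((2:ℕ):ℝ)) by norm_num, Real.rpow_natCast]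
    rw [hydef]; field_simp [hydef]
    try ring_nf
    try tauto
  have hR : (1/(1+2*p)) ^ s = 1 / (1+2*p) ^ s := by
    rw [Real.div_rpow zero_le_one hpp.le, Real.one_rpow]
  rw [hL, hy2, hR] at h2
  have hRpos : (0:ℝ) < (1+2*p) ^ s := Real.rpow_pos_of_pos hpp s
  have hp2 : (0:ℝ) < 4 * p ^ 2 := by positivity
  have hA : 0 ≤ x ^ (1/p) * (1-x)^2 := by positivity
  have h3 := mul_le_mul_of_nonneg_left h2 hRpos.le
  calc x ^ (1/p) * (1 - x) ^ 2 * ((1 + 2*p) ^ s / (4 * p ^ 2))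
      = (1+2*p)^s * (x ^ (1/p) * ((1-x)^2 / (4*p^2))) := by ring
    _ ≤ (1+2*p)^s * (1 / (1+2*p)^s) := h3
    _ = 1 := by field_simp

theorem stmt_12 (p α r : ℝ) (hp : 0 < p) (hα : α < 0)
    (hr : r = (1 + 2*p) ^ (2 + 1/p) / (4 * p ^ 2)) :
    ∀ θ ∈ Set.Icc (0:ℝ) 1,
      α ≤ r * α * θ * (1 - θ ^ p) ^ 2 ∧ r * α * θ * (1 - θ ^ p) ^ 2 ≤ 0 := by
  intro θ hθ
  obtain ⟨hθ0, hθ1⟩ := hθ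
  have hrpos : 0 ≤ r := by rw [hr]; positivity
  rcases eq_or_lt_of_le hθ0 with h0 | h0
  · constructor
    · simp [← h0]; linarith
    · simp [← h0]
  · have hx0 : 0 ≤ θ ^ p := Real.rpow_nonneg hθ0 p
    have hx1 : θ ^ p ≤ 1 := Real.rpow_le_one hθ0 hθ1 hp.le
    have hθeq : (θ ^ p) ^ (1/p) = θ := by
      rw [← Real.rpow_mul hθ0, mul_one_div, div_self hp.ne', Real.rpow_one]
    have hkey := key_aux p (θ ^ p) hp hx0 hx1
    rw [hθeq] at hkey
    have hfac : 0 ≤ r * θ * (1 - θ ^ p) ^ 2 := by positivity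
    have hfac1 : r * θ * (1 - θ ^ p) ^ 2 ≤ 1 := by
      rw [hr]; nlinarith [hkey]
    constructor
    · nlinarith
    · nlinarith
end
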